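/- arXiv:1705.05127 — 2 statements merged into one kernel-verified Lean document; each statement's English description precedes it below -/
import Mathlib

section
/- Let Q_q = [[b, b/a], [1, 0]] with a, b nonzero reals, and let ∘ denote the Hadamard (entrywise) product. For even n, det(Q_q^n ∘ Q_q^(−n)) = 1 + 2(b/a) q_n², where q_n is the n-th bi-periodic Fibonacci number. -/
/-- Bi-periodic Fibonacci sequence: q 0 = 0, q 1 = 1,
    q n = a * q (n-1) + q (n-2) if n even, q n = b * q (n-1) + q (n-2) if n odd. -/
def bpFib (a b : ℝ) : ℕ → ℝ
  | 0 => 0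
  | 1 => 1
  | n + 2 => (if Even (n + 2) then a else b) * bpFib a b (n + 1) + bpFib a b n

/-- Bi-periodic Lucas sequence: l 0 = 2, l 1 = a,
    l n = b * l (n-1) + l (n-2) if n even, l n = a * l (n-1) + l (n-2) if n odd. -/
def bpLucas (a b : ℝ) : ℕ → ℝ
  | 0 => 2
  | 1 => a
  | n + 2 => (if Even (n + 2) then b else a) * bpLucas a b (n + 1) + bpLucas a b n

lemma bpFib_rec (a b : ℝ) (n : ℕ) :
    bpFib a b (n + 2) = (if Even n then a else b) * bpFib a b (n + 1) + bpFib a b n := by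
  rw [bpFib]
  congr 2
  simp [Nat.even_add_one, parity_simps]

lemma bpFib_even_rec (a b : ℝ) (n : ℕ) (hn : Even n) :
    bpFib a b (n + 2) = a * bpFib a b (n + 1) + bpFib a b n := by
  rw [bpFib_rec, if_pos hn]

lemma bpFib_odd_rec (a b : ℝ) (n : ℕ) (hn : ¬ Even n) :
    bpFib a b (n + 2) = b * bpFib a b (n + 1) + bpFib a b n := by
  rw [bpFib_rec, if_neg hn]

lemma Qpow (a b : ℝ) (ha : a ≠ 0) (hb : b ≠ 0) (m : ℕ) :
    (!![b, b / a; 1, 0] : Matrix (Fin 2) (Fin 2) ℝ) ^ (2 * m + 2) =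
      !![(b/a)^(m+1) * bpFib a b (2*m+3), (b/a)^(m+2) * bpFib a b (2*m+2);
         (b/a)^(m+1) * bpFib a b (2*m+2), (b/a)^(m+1) * bpFib a b (2*m+1)] := by
  induction m with
  | zero =>
    have h2 : bpFib a b 2 = a := by
      rw [show (2:ℕ) = 0 + 2 from rfl, bpFib_even_rec a b 0 (by decide)]
      simp [bpFib]
    have h3 : bpFib a b 3 = b * a + 1 := by
      rw [show (3:ℕ) = 1 + 2 from rfl, bpFib_odd_rec a b 1 (by decide), h2]
      simp [bpFib]
    have h1 : bpFib a b 1 = 1 := rfl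
    rw [pow_two]
    ext i j
    fin_cases i <;> fin_cases j <;>
      simp [Matrix.mul_apply, Fin.sum_univ_two, h1, h2, h3] <;> field_simp <;> ring
  | succ m ih =>
    have e1 : bpFib a b (2*m+4) = a * bpFib a b (2*m+3) + bpFib a b (2*m+2) :=
      bpFib_even_rec a b (2*m+2) ⟨m+1, by ring⟩
    have e2 : bpFib a b (2*m+5) = b * bpFib a b (2*m+4) + bpFib a b (2*m+3) :=
      bpFib_odd_rec a b (2*m+3) (by simp [Nat.even_add_one, parity_simps])
    have e3 : bpFib a b (2*m+3) = b * bpFib a b (2*m+2) + bpFib a b (2*m+1) :=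
      bpFib_odd_rec a b (2*m+1) (by simp [Nat.even_add_one, parity_simps])
    have i1 : 2 * (m+1) + 3 = 2*m+5 := by ring
    have i2 : 2 * (m+1) + 2 = 2*m+4 := by ring
    have i3 : 2 * (m+1) + 1 = 2*m+3 := by ring
    rw [i1, i2, i3]
    conv_lhs => rw [show 2*m+4 = 2*m+2+1+1 by ring]
    rw [pow_succ, pow_succ, ih]
    ext i j
    fin_cases i <;> fin_cases j <;>
      simp [Matrix.mul_apply, Fin.sum_univ_two, e1, e2, e3, div_pow] <;> field_simp <;> ring

lemma cassini (a b : ℝ) (ha : a ≠ 0) (hb : b ≠ 0) (m : ℕ) :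
    bpFib a b (2*m+3) * bpFib a b (2*m+1) = 1 + (b/a) * bpFib a b (2*m+2)^2 := by
  have ht : (b/a) ≠ 0 := div_ne_zero hb ha
  have hd1 : ((!![b, b / a; 1, 0] : Matrix (Fin 2) (Fin 2) ℝ) ^ (2*m+2)).det
      = (b/a)^(2*m+2) := by
    rw [Matrix.det_pow]
    have : (!![b, b / a; 1, 0] : Matrix (Fin 2) (Fin 2) ℝ).det = -(b/a) := by
      simp [Matrix.det_fin_two_of]
    rw [this]
    exact Even.neg_pow ⟨m+1, by ring⟩ _
  rw [Qpow a b ha hb m, Matrix.det_fin_two_of] at hd1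
  have key : (b/a)^(2*m+2) * (bpFib a b (2*m+3) * bpFib a b (2*m+1))
      = (b/a)^(2*m+2) * (1 + (b/a) * bpFib a b (2*m+2)^2) := by
    linear_combination hd1
  exact mul_left_cancel₀ (pow_ne_zero _ ht) key

lemma Qinv (a b : ℝ) (ha : a ≠ 0) (hb : b ≠ 0) (m : ℕ) :
    ((!![b, b / a; 1, 0] : Matrix (Fin 2) (Fin 2) ℝ) ^ (2 * m + 2))⁻¹ =
      !![(a/b)^(m+1) * bpFib a b (2*m+1), -((a/b)^(m+1) * (b/a) * bpFib a b (2*m+2));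
         -((a/b)^(m+1) * bpFib a b (2*m+2)), (a/b)^(m+1) * bpFib a b (2*m+3)] := by
  have hu : (b/a)^(m+1) * (a/b)^(m+1) = 1 := by
    rw [← mul_pow]
    field_simp
    exact one_pow _
  have hC := cassini a b ha hb m
  apply Matrix.inv_eq_right_inv
  rw [Qpow a b ha hb m]
  generalize bpFib a b (2*m+1) = q1 at hC ⊢
  generalize bpFib a b (2*m+2) = q2 at hC ⊢
  generalize bpFib a b (2*m+3) = q3 at hC ⊢
  ext i j
  fin_cases i <;> fin_cases j <;>
    simp [Matrix.mul_apply, Fin.sum_univ_two, Matrix.one_apply]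
  case _ => linear_combination hu + ((b/a)^(m+1) * (a/b)^(m+1)) * hC
  case _ => ring
  case _ => ring
  case _ => linear_combination hu + ((b/a)^(m+1) * (a/b)^(m+1)) * hC


theorem hadamard_det_even (a b : ℝ) (ha : a ≠ 0) (hb : b ≠ 0) (n : ℕ) (h : Even n) :
    (Matrix.hadamard ((!![b, b / a; 1, 0] : Matrix (Fin 2) (Fin 2) ℝ) ^ n)
        (((!![b, b / a; 1, 0] : Matrix (Fin 2) (Fin 2) ℝ) ^ n)⁻¹)).det =
      1 + 2 * (b / a) * (bpFib a b n) ^ 2 := by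
  obtain ⟨k, hk⟩ := h
  match k, hk with
  | 0, hk =>
    subst hk
    simp [Matrix.hadamard, Matrix.det_fin_two, Matrix.one_apply, bpFib]
  | (m+1), hk =>
    have hn : n = 2*m+2 := by omega
    subst hn
    have hu : (b/a)^(m+1) * (a/b)^(m+1) = 1 := by
      rw [← mul_pow]
      field_simp
      exact one_pow _
    have hC := cassini a b ha hb m
    rw [Qinv a b ha hb m, Qpow a b ha hb m]
    generalize bpFib a b (2*m+1) = q1 at hC ⊢
    generalize bpFib a b (2*m+2) = q2 at hC ⊢
    generalize bpFib a b (2*m+3) = q3 at hC ⊢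
    simp only [Matrix.hadamard, Matrix.det_fin_two, Matrix.of_apply,
      Matrix.cons_val', Matrix.cons_val_zero, Matrix.cons_val_one, Matrix.head_cons,
      Matrix.empty_val', Matrix.cons_val_fin_one, Matrix.head_fin_const]
    linear_combination
      ((1 + 2*(b/a)*q2^2) * ((b/a)^(m+1) * (a/b)^(m+1) + 1)) * hu +
      (((b/a)^(m+1) * (a/b)^(m+1))^2 * (q3 * q1 + 1 + (b/a)*q2^2)) * hC
end

section
/- Let Q_q = [[b, b/a], [1, 0]] with a, b nonzero reals. For odd n, det(Q_q^n ∘ Q_q^(−n)) = 1 − 2 q_n², where ∘ is the Hadamard product and q_n is the n-th bi-periodic Fibonacci number. -/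
lemma bpFib_even (a b : ℝ) (m : ℕ) :
    bpFib a b (2*m+2) = a * bpFib a b (2*m+1) + bpFib a b (2*m) := by
  rw [show 2*m+2 = (2*m)+2 from rfl, bpFib]
  simp [Nat.even_add]

lemma bpFib_odd (a b : ℝ) (m : ℕ) :
    bpFib a b (2*m+3) = b * bpFib a b (2*m+2) + bpFib a b (2*m+1) := by
  rw [show 2*m+3 = (2*m+1)+2 from rfl, bpFib]
  simp [Nat.even_add, Nat.even_add_one, parity_simps]

lemma Qpow_odd (a b : ℝ) (ha : a ≠ 0) (m : ℕ) :
    (!![b, b / a; 1, 0] : Matrix (Fin 2) (Fin 2) ℝ) ^ (2*m+1) =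
      !![(b/a)^(m+1) * bpFib a b (2*m+2), (b/a)^(m+1) * bpFib a b (2*m+1);
         (b/a)^m * bpFib a b (2*m+1), (b/a)^(m+1) * bpFib a b (2*m)] := by
  induction m with
  | zero =>
      have h2 : bpFib a b 2 = a := by
        rw [show (2:ℕ) = 0+2 from rfl, bpFib]; simp [bpFib]
      simp [bpFib, pow_one, h2]
      field_simp
  | succ m ih =>
      have h2 : (!![b, b / a; 1, 0] : Matrix (Fin 2) (Fin 2) ℝ) ^ 2 =
          !![b^2 + b/a, b^2/a; b, b/a] := by
        rw [pow_two]
        ext i j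
        fin_cases i <;> fin_cases j <;> simp [Matrix.mul_apply, Fin.sum_univ_two] <;> ring
      have hp : (!![b, b / a; 1, 0] : Matrix (Fin 2) (Fin 2) ℝ) ^ (2*(m+1)+1) =
          !![b^2 + b/a, b^2/a; b, b/a] *
          !![(b/a)^(m+1) * bpFib a b (2*m+2), (b/a)^(m+1) * bpFib a b (2*m+1);
             (b/a)^m * bpFib a b (2*m+1), (b/a)^(m+1) * bpFib a b (2*m)] := by
        rw [show 2*(m+1)+1 = 2+(2*m+1) by ring, pow_add, h2, ih]
      rw [hp, show 2*(m+1)+2 = 2*m+4 by ring, show 2*(m+1)+1 = 2*m+3 by ring,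
        show 2*(m+1) = 2*m+2 by ring]
      have e1 := bpFib_even a b m
      have e2 := bpFib_odd a b m
      have e3 : bpFib a b (2*m+4) = a * bpFib a b (2*m+3) + bpFib a b (2*m+2) := by
        have := bpFib_even a b (m+1)
        rwa [show 2*(m+1)+2 = 2*m+4 by ring, show 2*(m+1)+1 = 2*m+3 by ring,
          show 2*(m+1) = 2*m+2 by ring] at this
      ext i j
      fin_cases i <;> fin_cases j <;>
        simp [Matrix.mul_apply, Fin.sum_univ_two] <;>
        simp only [e3, e2, e1, div_pow] <;> field_simp <;> ring

theorem hadamard_det_odd (a b : ℝ) (ha : a ≠ 0) (hb : b ≠ 0) (n : ℕ) (h : Odd n) :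
    (Matrix.hadamard ((!![b, b / a; 1, 0] : Matrix (Fin 2) (Fin 2) ℝ) ^ n)
        (((!![b, b / a; 1, 0] : Matrix (Fin 2) (Fin 2) ℝ) ^ n)⁻¹)).det =
      1 - 2 * (bpFib a b n) ^ 2 := by
  obtain ⟨m, rfl⟩ := h
  have hc : b / a ≠ 0 := div_ne_zero hb ha
  have hcp : (b/a)^(2*m+1) ≠ 0 := pow_ne_zero _ hc
  have hQ := Qpow_odd a b ha m
  set X := bpFib a b (2*m) with hX
  set Y := bpFib a b (2*m+1) with hY
  set Z := bpFib a b (2*m+2) with hZ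
  have hd : ((!![b, b/a; 1, 0] : Matrix (Fin 2) (Fin 2) ℝ) ^ (2*m+1)).det
      = -(b/a)^(2*m+1) := by
    rw [Matrix.det_pow, Matrix.det_fin_two_of,
      show b*0 - b/a*1 = -(b/a) by ring, Odd.neg_pow ⟨m, by ring⟩]
  have hC : (b/a) * Z * X - Y^2 = -1 := by
    have h1 := hd
    rw [hQ, Matrix.det_fin_two_of] at h1
    apply mul_left_cancel₀ hcp
    linear_combination h1
  have hde : ((b/a)^(m+1)*Z) * ((b/a)^(m+1)*X) - ((b/a)^(m+1)*Y) * ((b/a)^m*Y)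
      = -(b/a)^(2*m+1) := by
    linear_combination (b/a)^(2*m+1) * hC
  have hinv : (((!![b, b/a; 1, 0] : Matrix (Fin 2) (Fin 2) ℝ)) ^ (2*m+1))⁻¹ =
      (-(b/a)^(2*m+1))⁻¹ •
        !![(b/a)^(m+1)*X, -((b/a)^(m+1)*Y); -((b/a)^m*Y), (b/a)^(m+1)*Z] := by
    rw [Matrix.inv_def, hQ, Matrix.adjugate_fin_two_of, Matrix.det_fin_two_of,
      Ring.inverse_eq_inv', hde]
  rw [Matrix.det_fin_two, hinv, hQ]
  simp only [Matrix.hadamard_apply, Matrix.smul_apply, Matrix.of_apply,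
    Matrix.cons_val', Matrix.cons_val_zero, Matrix.cons_val_one, Matrix.head_cons,
    Matrix.head_fin_const, Matrix.empty_val', Matrix.cons_val_fin_one,
    smul_eq_mul, inv_neg]
  set c := b/a with hcdef
  field_simp
  linear_combination (c^(2*m+1))^2 * (c*Z*X + Y^2 - 1) * hC
end
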